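/- Let T be a tree with at least 2 vertices and let v be any leaf of T. Then the set of all leaves of T other than v is a (0-leaky) zero forcing set of T. -/
import Mathlib


open SimpleGraph

namespace LF

variable {V : Type*}

/-- Vertices eventually forced blue, starting from `S`, with leak set `L`:
a blue vertex not in `L` whose every neighbor other than `w` is blue forces `w`. -/
inductive Forced (G : SimpleGraph V) (L S : Set V) : V → Prop
  | init (v : V) (hv : v ∈ S) : Forced G L S v
  | force (b w : V) (hb : Forced G L S b) (hbL : b ∉ L) (hadj : G.Adj b w)
      (hall : ∀ u, G.Adj b u → u ≠ w → Forced G L S u) : Forced G L S w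

/-- `S` is an ℓ-leaky forcing set of `G`. -/
def IsLeakyForcingSet (G : SimpleGraph V) (ℓ : ℕ) (S : Set V) : Prop :=
  ∀ L : Set V, L.ncard ≤ ℓ → ∀ v, Forced G L S v

/-- The ℓ-leaky forcing number `Z_{(ℓ)}(G)`. -/
noncomputable def leakyForcingNumber (G : SimpleGraph V) [Fintype V] (ℓ : ℕ) : ℕ :=
  sInf {k | ∃ S : Finset V, S.card = k ∧ IsLeakyForcingSet G ℓ ↑S}

/-- An ℓ-leaky fort: a nonempty set `F` such that at most ℓ vertices outside `F`
have exactly one neighbor in `F`. -/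
def IsLeakyFort (G : SimpleGraph V) (ℓ : ℕ) (F : Set V) : Prop :=
  F.Nonempty ∧ {v | v ∉ F ∧ ∃! u, u ∈ F ∧ G.Adj v u}.ncard ≤ ℓ

/-- The path graph on `n` vertices. -/
def pathGraph (n : ℕ) : SimpleGraph (Fin n) :=
  SimpleGraph.fromRel (fun i j => i.val + 1 = j.val)

/-- The cycle graph on `n` vertices. -/
def cycleGraph (n : ℕ) : SimpleGraph (Fin n) :=
  SimpleGraph.fromRel (fun i j => (i.val + 1) % n = j.val)

/-- The star graph on `n` vertices, with center `0`. -/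
def starGraph (n : ℕ) : SimpleGraph (Fin n) :=
  SimpleGraph.fromRel (fun i _ => i.val = 0)

/-- The generalized Petersen graph `P(n,k)`: `Sum.inl i` is the inner vertex `x_{i+1}`,
`Sum.inr i` is the outer vertex `y_{i+1}` (0-indexed). -/
def petersen (n k : ℕ) : SimpleGraph (Fin n ⊕ Fin n) :=
  SimpleGraph.fromRel (fun a b =>
    match a, b with
    | Sum.inr i, Sum.inr j => (i.val + 1) % n = j.val
    | Sum.inl i, Sum.inr j => i = j
    | Sum.inl i, Sum.inl j => (i.val + k) % n = j.val
    | _, _ => False)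

end LF


open SimpleGraph

lemma tree_key {V : Type*} [DecidableEq V] {G : SimpleGraph V} (hT : G.IsTree) (v w : V) (hw : w ≠ v) :
    ∃ b, G.Adj w b ∧ G.dist b v + 1 = G.dist w v ∧
      ∀ u, G.Adj w u → u ≠ b → G.dist u v = G.dist w v + 1 := by
  have hconn := hT.isConnected
  obtain ⟨p, hp, hlen⟩ := hconn.exists_path_of_dist w v
  have hd : 0 < G.dist w v := hconn.pos_dist_of_ne hw
  have hnil : ¬ p.Nil := Walk.not_nil_of_ne hw
  refine ⟨p.getVert 1, p.adj_snd hnil, ?_, ?_⟩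
  · -- dist (p.getVert 1) v = dist w v - 1
    have h1 : G.dist (p.getVert 1) v ≤ p.tail.length := dist_le _
    have h2 : p.tail.length + 1 = p.length := Walk.length_tail_add_one hnil
    have h3 : G.dist w v ≤ G.dist w (p.getVert 1) + G.dist (p.getVert 1) v :=
      hconn.dist_triangle
    have h4 : G.dist w (p.getVert 1) = 1 :=
      dist_eq_one_iff_adj.mpr (p.adj_snd hnil)
    omega
  · intro u hadj hne
    have hdu1 : G.dist u v ≤ 1 + G.dist w v := by
      have := hconn.dist_triangle (u := u) (v := w) (w := v)
      have h4 : G.dist u w = 1 := dist_eq_one_iff_adj.mpr hadj.symm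
      omega
    have hdu2 : G.dist w v ≤ 1 + G.dist u v := by
      have := hconn.dist_triangle (u := w) (v := u) (w := v)
      have h4 : G.dist w u = 1 := dist_eq_one_iff_adj.mpr hadj
      omega
    -- rule out dist u v ≤ dist w v
    by_contra hcon
    have hle : G.dist u v ≤ G.dist w v := by omega
    obtain ⟨q, hq, hqlen⟩ := hconn.exists_path_of_dist u v
    have hwq : w ∉ q.support := by
      intro hmem
      have hspec := q.take_spec hmem
      have hlens : (q.takeUntil w hmem).length + (q.dropUntil w hmem).length = q.length := by
        rw [← Walk.length_append, hspec]
      have hdrop : G.dist w v ≤ (q.dropUntil w hmem).length := dist_le _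
      have htake : 0 < (q.takeUntil w hmem).length := by
        have : ¬ (q.takeUntil w hmem).Nil := Walk.not_nil_of_ne (fun h => hadj.ne h.symm)
        have := (Walk.nil_iff_length_eq (p := q.takeUntil w hmem)).not.mp this
        omega
      omega
    have hcons : (q.cons hadj).IsPath := hq.cons hwq
    have huniq := hT.existsUnique_path w v
    obtain ⟨r, -, hr⟩ := huniq
    have e1 : q.cons hadj = r := hr _ hcons
    have e2 : p = r := hr _ hp
    have elen : q.length + 1 = p.length := by
      rw [e2, ← e1]; simp
    -- so dist u v + 1 = dist w v, i.e. u is at distance d - 1; then u = getVert 1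
    have : u = p.getVert 1 := by
      rw [e2, ← e1]
      simp [Walk.getVert_cons_succ]
    exact hne this


theorem stmt7 {V : Type*} [Fintype V] [DecidableEq V] (G : SimpleGraph V) [DecidableRel G.Adj]
    (hT : G.IsTree) (hn : 2 ≤ Fintype.card V) (v : V) (hv : G.degree v = 1) :
    LF.IsLeakyForcingSet G 0
      ↑((Finset.univ.filter fun w => G.degree w = 1) \ {v}) := by
  intro L hL u0
  have hLe : L = ∅ := by
    have hfin := L.toFinite
    have := (Set.ncard_eq_zero hfin).mp (Nat.le_zero.mp hL)
    exact this
  subst hLe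
  have hconn := hT.isConnected
  set S : Set V := ↑((Finset.univ.filter fun w => G.degree w = 1) \ {v}) with hS
  have hmemS : ∀ w, G.degree w = 1 → w ≠ v → w ∈ S := by
    intro w h1 h2; simp [hS, h1, h2]
  have main : ∀ n, ∀ w, w ≠ v → Fintype.card V - G.dist w v ≤ n → LF.Forced G ∅ S w := by
    intro n
    induction n with
    | zero =>
      intro w hwv hm
      exfalso
      obtain ⟨p, hp, hlen⟩ := hconn.exists_path_of_dist w v
      have := hp.length_lt
      omega
    | succ n ih =>
      intro w hwv hm
      obtain ⟨b, hadjb, hdb, hall⟩ := tree_key hT v w hwv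
      have hd : 0 < G.dist w v := hconn.pos_dist_of_ne hwv
      by_cases hdeg : G.degree w = 1
      · exact LF.Forced.init w (hmemS w hdeg hwv)
      · have hb : b ∈ G.neighborFinset w := by
          rw [SimpleGraph.mem_neighborFinset]; exact hadjb
        have h2 : 1 < (G.neighborFinset w).card := by
          rw [G.card_neighborFinset_eq_degree]
          have h1 : 0 < G.degree w := by
            rw [← G.card_neighborFinset_eq_degree]; exact Finset.card_pos.mpr ⟨b, hb⟩
          omega
        obtain ⟨c, hc, hcb⟩ := Finset.exists_mem_ne h2 b
        rw [SimpleGraph.mem_neighborFinset] at hc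
        have hdc : G.dist c v = G.dist w v + 1 := hall c hc hcb
        have hcv : c ≠ v := by
          intro h; subst h; rw [SimpleGraph.dist_self] at hdc; omega
        obtain ⟨b', hadjb', hdb', hall'⟩ := tree_key hT v c hcv
        have hwb' : w = b' := by
          by_contra hne
          have := hall' w hc.symm hne
          omega
        refine LF.Forced.force c w ?_ (by simp) hc.symm ?_
        · exact ih c hcv (by omega)
        · intro u hu hune
          have hdu : G.dist u v = G.dist c v + 1 := hall' u hu (hwb' ▸ hune)
          have huv : u ≠ v := by
            intro h; subst h; rw [SimpleGraph.dist_self] at hdu; omega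
          exact ih u huv (by omega)
  by_cases hu0 : u0 = v
  · subst hu0
    obtain ⟨b, hbmem⟩ : ∃ b, b ∈ G.neighborFinset u0 := by
      apply Finset.card_pos.mp
      rw [G.card_neighborFinset_eq_degree, hv]
      omega
    rw [SimpleGraph.mem_neighborFinset] at hbmem
    have hbv : b ≠ u0 := Ne.symm hbmem.ne
    obtain ⟨b'', hadjb'', hdb'', hall''⟩ := tree_key hT u0 b hbv
    have hdb1 : G.dist b u0 = 1 := SimpleGraph.dist_eq_one_iff_adj.mpr hbmem.symm
    have hb''v : b'' = u0 := by
      apply (hconn.dist_eq_zero_iff).mp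
      omega
    refine LF.Forced.force b u0 ?_ (by simp) hbmem.symm ?_
    · exact main (Fintype.card V) b hbv (by omega)
    · intro u hu hune
      have hdu : G.dist u u0 = G.dist b u0 + 1 := hall'' u hu (hb''v ▸ hune)
      exact main (Fintype.card V) u hune (by omega)
  · exact main (Fintype.card V) u0 hu0 (by omega)
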